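/- Let (B_i)_{i∈ℕ} be independent real random variables each with all exponential moments finite, with cumulant generating functions Γ_i. If for every λ ∈ ℝ the series Σ_{i=1}^∞ Γ_i(λ) converges to a finite limit, then Σ_{i=1}^∞ E[B_i] and Σ_{i=1}^∞ Var(B_i) both converge to finite limits, and the partial sums Σ_{i=1}^N B_i converge P-almost surely and in L²(P) to a random variable B. -/

import Mathlib

open MeasureTheory Real Filter
open scoped ENNReal NNReal

lemma aux_sq_add_two_le (x : ℝ) : x ^ 2 + 2 ≤ Real.exp x + Real.exp (-x) := by
  have h1 : Real.exp (x/2) * Real.exp (-(x/2)) = 1 := by rw [← Real.exp_add]; simp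
  have h2 : Real.exp (x/2) * Real.exp (x/2) = Real.exp x := by
    rw [← Real.exp_add]; ring_nf
  have h3 : Real.exp (-(x/2)) * Real.exp (-(x/2)) = Real.exp (-x) := by
    rw [← Real.exp_add]; ring_nf
  have hs : Real.sinh (x/2) = (Real.exp (x/2) - Real.exp (-(x/2)))/2 := Real.sinh_eq _
  rcases le_or_gt 0 x with hx | hx
  · have hle : x/2 ≤ Real.sinh (x/2) := by
      rcases eq_or_lt_of_le hx with h | h
      · simp [← h]
      · exact (Real.self_lt_sinh_iff.2 (by linarith)).le
    rw [hs] at hle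
    nlinarith [Real.exp_pos (x/2), Real.exp_pos (-(x/2))]
  · have hle : Real.sinh (x/2) ≤ x/2 := (Real.sinh_lt_self_iff.2 (by linarith)).le
    rw [hs] at hle
    nlinarith [Real.exp_pos (x/2), Real.exp_pos (-(x/2))]

lemma aux_exp_sub_one {y : ℝ} (hy : 0 ≤ y) : Real.exp y - 1 ≤ y * Real.exp y := by
  have h1 : -y + 1 ≤ Real.exp (-y) := Real.add_one_le_exp (-y)
  have h2 : Real.exp (-y) * Real.exp y = 1 := by rw [← Real.exp_add]; simp
  nlinarith [mul_le_mul_of_nonneg_right h1 (Real.exp_pos y).le]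

lemma aux_eLpNorm_two {Ω : Type*} [MeasurableSpace Ω] {μ : Measure Ω} [IsProbabilityMeasure μ]
    {f : Ω → ℝ} (hf : MemLp f 2 μ) (h0 : ∫ ω, f ω ∂μ = 0) :
    eLpNorm f 2 μ = ENNReal.ofReal (Real.sqrt (ProbabilityTheory.variance f μ)) := by
  have hev : ProbabilityTheory.evariance f μ = ∫⁻ ω, ‖f ω‖ₑ ^ 2 ∂μ := by
    rw [ProbabilityTheory.evariance]
    simp only [h0, sub_zero]
  have h1 : eLpNorm f 2 μ = ProbabilityTheory.evariance f μ ^ (1 / 2 : ℝ) := by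
    rw [eLpNorm_eq_lintegral_rpow_enorm_toReal two_ne_zero ENNReal.ofNat_ne_top, hev]
    simp only [ENNReal.toReal_ofNat]
    congr 1
    apply lintegral_congr
    intro ω
    rw [← ENNReal.rpow_two]
  rw [h1, ← hf.ofReal_variance_eq, Real.sqrt_eq_rpow,
    ENNReal.ofReal_rpow_of_nonneg (ProbabilityTheory.variance_nonneg f μ) (by norm_num)]

/-- For independent `B_i` with all exponential moments finite and cumulant
generating functions `Γ_i`, if `Σ_i Γ_i(λ)` converges for every `λ`, then `Σ_i E[B_i]` and
`Σ_i Var(B_i)` converge, and the partial sums `Σ_{i<N} B_i` converge a.s. and in `L²` to a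
random variable `B`. -/
theorem stmt_11 {Ω : Type*} [MeasurableSpace Ω] (μ : Measure Ω) [IsProbabilityMeasure μ]
    (B : ℕ → Ω → ℝ) (hmeas : ∀ i, Measurable (B i))
    (hindep : ProbabilityTheory.iIndepFun B μ)
    (hInt : ∀ i, ∀ l : ℝ, Integrable (fun ω => Real.exp (l * B i ω)) μ)
    (hsum : ∀ l : ℝ, ∃ L : ℝ,
      Tendsto (fun N => ∑ i ∈ Finset.range N,
        Real.log (∫ ω, Real.exp (l * B i ω) ∂μ)) atTop (nhds L)) :
    (∃ m : ℝ, Tendsto (fun N => ∑ i ∈ Finset.range N, ∫ ω, B i ω ∂μ) atTop (nhds m)) ∧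
    (∃ v : ℝ, Tendsto (fun N => ∑ i ∈ Finset.range N,
        ∫ ω, (B i ω - ∫ ω', B i ω' ∂μ) ^ 2 ∂μ) atTop (nhds v)) ∧
    ∃ Blim : Ω → ℝ,
      (∀ᵐ ω ∂μ, Tendsto (fun N => ∑ i ∈ Finset.range N, B i ω) atTop (nhds (Blim ω))) ∧
      Tendsto (fun N =>
        eLpNorm (fun ω => (∑ i ∈ Finset.range N, B i ω) - Blim ω) 2 μ) atTop (nhds 0) := by
  classical
  have habs : ∀ x : ℝ, |x| ≤ Real.exp x + Real.exp (-x) := by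
    intro x
    rcases le_or_gt 0 x with h | h
    · rw [abs_of_nonneg h]; nlinarith [Real.add_one_le_exp x, (Real.exp_pos (-x)).le]
    · rw [abs_of_neg h]; nlinarith [Real.add_one_le_exp (-x), (Real.exp_pos x).le]
  have hBint : ∀ i, Integrable (B i) μ := by
    intro i
    refine Integrable.mono' ((hInt i 1).add (hInt i (-1))) (hmeas i).aestronglyMeasurable
      (ae_of_all _ fun ω => ?_)
    simp only [Pi.add_apply, one_mul, neg_one_mul, Real.norm_eq_abs]
    exact habs _
  have hBsq : ∀ i, Integrable (fun ω => B i ω ^ 2) μ := by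
    intro i
    refine Integrable.mono' ((hInt i 1).add (hInt i (-1))) ?_ (ae_of_all _ fun ω => ?_)
    · exact ((hmeas i).pow_const 2).aestronglyMeasurable
    · simp only [Pi.add_apply, one_mul, neg_one_mul, Real.norm_eq_abs]
      rw [abs_of_nonneg (sq_nonneg (B i ω))]
      nlinarith [aux_sq_add_two_le (B i ω)]
  have hB2 : ∀ i, MemLp (B i) 2 μ := fun i =>
    (memLp_two_iff_integrable_sq (hmeas i).aestronglyMeasurable).2 (hBsq i)
  have hjen : ∀ i (l : ℝ), Real.exp (l * ∫ ω, B i ω ∂μ) ≤ ∫ ω, Real.exp (l * B i ω) ∂μ := by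
    intro i l
    have := convexOn_exp.map_integral_le continuous_exp.continuousOn isClosed_univ
      (ae_of_all _ fun ω => Set.mem_univ _) ((hBint i).const_mul l)
      (by exact hInt i l) (μ := μ) (f := fun ω => l * B i ω)
    simpa [integral_const_mul] using this
  set m : ℕ → ℝ := fun i => ∫ ω, B i ω ∂μ with hm
  set g : ℝ → ℕ → ℝ := fun l i => ∫ ω, Real.exp (l * B i ω) ∂μ with hg
  have hgpos : ∀ l i, 0 < g l i := fun l i => lt_of_lt_of_le (Real.exp_pos _) (hjen i l)
  set Γ : ℝ → ℕ → ℝ := fun l i => Real.log (g l i) with hΓdef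
  have hΓ : ∀ (l : ℝ) i, l * m i ≤ Γ l i := fun l i =>
    (Real.le_log_iff_exp_le (hgpos l i)).2 (hjen i l)
  have hta : ∀ i, m i ≤ Γ 1 i := fun i => by simpa using hΓ 1 i
  have htb : ∀ i, -m i ≤ Γ (-1) i := fun i => by simpa using hΓ (-1) i
  set t : ℕ → ℝ := fun i => Γ 1 i + Γ (-1) i with ht
  have htnn : ∀ i, 0 ≤ t i := fun i => by have := hta i; have := htb i; simp only [ht]; linarith
  obtain ⟨La, hLa⟩ := hsum 1
  obtain ⟨Lb, hLb⟩ := hsum (-1)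
  have ht_tend : Tendsto (fun N => ∑ i ∈ Finset.range N, t i) atTop (nhds (La + Lb)) := by
    have heq : (fun N => ∑ i ∈ Finset.range N, t i)
        = fun N => (∑ i ∈ Finset.range N, Γ 1 i) + ∑ i ∈ Finset.range N, Γ (-1) i := by
      funext N; rw [← Finset.sum_add_distrib]
    rw [heq]; exact hLa.add hLb
  have htmono : Monotone (fun N => ∑ i ∈ Finset.range N, t i) := fun p q hpq =>
    Finset.sum_le_sum_of_subset_of_nonneg (Finset.range_subset_range.2 hpq) fun i _ _ => htnn i
  have htsummable : Summable t :=
    summable_of_sum_range_le htnn fun n => htmono.ge_of_tendsto ht_tend n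
  set r : ℕ → ℝ := fun i => Γ 1 i - m i with hr
  have hrnn : ∀ i, 0 ≤ r i := fun i => by have := hta i; simp only [hr]; linarith
  have hsnn : ∀ i, 0 ≤ t i - r i := fun i => by have := htb i; simp only [hr, ht]; linarith
  have hrle : ∀ i, r i ≤ t i := fun i => by have := hsnn i; linarith
  have hrsum : Summable r := htsummable.of_nonneg_of_le hrnn hrle
  have hm_tend : Tendsto (fun N => ∑ i ∈ Finset.range N, m i) atTop (nhds (La - tsum r)) := by
    have h1 : ∀ N : ℕ, ∑ i ∈ Finset.range N, m i
        = (∑ i ∈ Finset.range N, Γ 1 i) - ∑ i ∈ Finset.range N, r i := by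
      intro N; rw [← Finset.sum_sub_distrib]; congr 1; ext i; simp [hr]
    simp only [h1]
    exact hLa.sub hrsum.hasSum.tendsto_sum_nat
  refine ⟨⟨La - tsum r, hm_tend⟩, ?_⟩
  -- variance part
  set v : ℕ → ℝ := fun i => ∫ ω, (B i ω - m i) ^ 2 ∂μ with hv
  have hvnn : ∀ i, 0 ≤ v i := fun i => integral_nonneg fun ω => sq_nonneg _
  have hXsq_int : ∀ i, Integrable (fun ω => (B i ω - m i) ^ 2) μ := fun i =>
    ((hB2 i).sub (memLp_const (m i))).integrable_sq
  have hvle : ∀ i, v i ≤ Real.exp (r i) + Real.exp (t i - r i) - 2 := by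
    intro i
    have hint2 : Integrable
        (fun ω => Real.exp (-m i) * Real.exp (1 * B i ω)
          + Real.exp (m i) * Real.exp ((-1) * B i ω) - 2) μ :=
      ((((hInt i 1).const_mul _).add ((hInt i (-1)).const_mul _)).sub (integrable_const 2))
    have hmono : ∀ ω, (B i ω - m i) ^ 2
        ≤ Real.exp (-m i) * Real.exp (1 * B i ω) + Real.exp (m i) * Real.exp ((-1) * B i ω) - 2 := by
      intro ω
      have h := aux_sq_add_two_le (B i ω - m i)
      rw [show Real.exp (B i ω - m i) = Real.exp (-m i) * Real.exp (1 * B i ω) by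
            rw [← Real.exp_add]; ring_nf,
          show Real.exp (-(B i ω - m i)) = Real.exp (m i) * Real.exp ((-1) * B i ω) by
            rw [← Real.exp_add]; ring_nf] at h
      linarith
    have i1 : Integrable (fun ω => Real.exp (-m i) * Real.exp (1 * B i ω)) μ :=
      (hInt i 1).const_mul _
    have i2 : Integrable (fun ω => Real.exp (m i) * Real.exp ((-1) * B i ω)) μ :=
      (hInt i (-1)).const_mul _
    have i12 : Integrable (fun ω => Real.exp (-m i) * Real.exp (1 * B i ω)
        + Real.exp (m i) * Real.exp ((-1) * B i ω)) μ := i1.add i2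
    have hRHS : ∫ ω, (Real.exp (-m i) * Real.exp (1 * B i ω)
        + Real.exp (m i) * Real.exp ((-1) * B i ω) - 2) ∂μ
        = Real.exp (-m i) * g 1 i + Real.exp (m i) * g (-1) i - 2 := by
      rw [integral_sub i12 (integrable_const 2), integral_add i1 i2, integral_const_mul,
        integral_const_mul, integral_const]
      simp only [probReal_univ, one_smul]; rfl
    have h1 : v i ≤ Real.exp (-m i) * g 1 i + Real.exp (m i) * g (-1) i - 2 := by
      have h2 := integral_mono (hXsq_int i) hint2 hmono
      rw [hRHS] at h2
      exact h2
    have hg1 : Real.exp (-m i) * g 1 i = Real.exp (r i) := by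
      rw [← Real.exp_log (hgpos 1 i), ← Real.exp_add]; congr 1; simp [hr, hΓdef]; ring
    have hg2 : Real.exp (m i) * g (-1) i = Real.exp (t i - r i) := by
      rw [← Real.exp_log (hgpos (-1) i), ← Real.exp_add]; congr 1; simp [hr, ht, hΓdef]; ring
    rw [hg1, hg2] at h1; exact h1
  have hvC : ∀ i, v i ≤ t i * (2 * Real.exp (tsum t)) := by
    intro i
    have hiT : t i ≤ tsum t := Summable.le_tsum htsummable i fun j _ => htnn j
    have e1 : Real.exp (r i) - 1 ≤ r i * Real.exp (tsum t) := by
      have := aux_exp_sub_one (hrnn i)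
      have h2 : r i * Real.exp (r i) ≤ r i * Real.exp (tsum t) :=
        mul_le_mul_of_nonneg_left (Real.exp_le_exp.2 (le_trans (hrle i) hiT)) (hrnn i)
      linarith
    have e2 : Real.exp (t i - r i) - 1 ≤ (t i - r i) * Real.exp (tsum t) := by
      have := aux_exp_sub_one (hsnn i)
      have h2 : (t i - r i) * Real.exp (t i - r i) ≤ (t i - r i) * Real.exp (tsum t) :=
        mul_le_mul_of_nonneg_left (Real.exp_le_exp.2 (le_trans (by linarith [hrnn i]) hiT)) (hsnn i)
      linarith
    have := hvle i
    nlinarith [Real.exp_pos (tsum t), htnn i, hrnn i]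
  have hvsum : Summable v := Summable.of_nonneg_of_le hvnn hvC (htsummable.mul_right _)
  obtain ⟨mInf, hm_tend2⟩ : ∃ L : ℝ,
      Tendsto (fun N => ∑ i ∈ Finset.range N, m i) atTop (nhds L) := ⟨La - tsum r, hm_tend⟩
  refine ⟨⟨tsum v, hvsum.hasSum.tendsto_sum_nat⟩, ?_⟩
  set X : ℕ → Ω → ℝ := fun i ω => B i ω - m i with hX
  have hXmeas : ∀ i, Measurable (X i) := fun i => (hmeas i).sub_const _
  have hX2 : ∀ i, MemLp (X i) 2 μ := fun i => (hB2 i).sub (memLp_const (m i))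
  have hXint : ∀ i, Integrable (X i) μ := fun i => (hBint i).sub (integrable_const _)
  have hXmean : ∀ i, ∫ ω, X i ω ∂μ = 0 := fun i => by
    simp [hX, integral_sub (hBint i) (integrable_const (m i))]; exact sub_self _
  have hXvar : ∀ i, ProbabilityTheory.variance (X i) μ = v i := fun i => by
    rw [ProbabilityTheory.variance_of_integral_eq_zero (hXmeas i).aemeasurable (hXmean i)]
  set S : ℕ → Ω → ℝ := fun n => ∑ i ∈ Finset.range n, X i with hS
  have hSapp : ∀ n ω, S n ω = ∑ i ∈ Finset.range n, X i ω := fun n ω => by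
    simp [hS, Finset.sum_apply]
  have hSmem : ∀ n, MemLp (S n) 2 μ := fun n => memLp_finset_sum' _ fun i _ => hX2 i
  have hSint : ∀ n, Integrable (S n) μ := fun n => (hSmem n).integrable one_le_two
  -- mean zero for any finset sum
  have hmean_sum : ∀ s : Finset ℕ, ∫ ω, (∑ i ∈ s, X i) ω ∂μ = 0 := by
    intro s
    have : ∀ ω, (∑ i ∈ s, X i) ω = ∑ i ∈ s, X i ω := fun ω => Finset.sum_apply _ _ _
    simp only [this]
    rw [integral_finset_sum _ fun i _ => hXint i]
    simp [hXmean]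
  have hXindep : ∀ i j, i ≠ j → ProbabilityTheory.IndepFun (X i) (X j) μ := fun i j hij =>
    (hindep.indepFun hij).comp (measurable_id.sub_const (m i)) (measurable_id.sub_const (m j))
  have hvar_sum : ∀ s : Finset ℕ,
      ProbabilityTheory.variance (∑ i ∈ s, X i) μ = ∑ i ∈ s, v i := by
    intro s
    rw [ProbabilityTheory.IndepFun.variance_sum (fun i _ => hX2 i)
      (fun i _ j _ hij => hXindep i j hij)]
    simp only [hXvar]
  have hkey : ∀ s : Finset ℕ,
      eLpNorm (∑ i ∈ s, X i) 2 μ = ENNReal.ofReal (Real.sqrt (∑ i ∈ s, v i)) := by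
    intro s
    rw [aux_eLpNorm_two (memLp_finset_sum' _ fun i _ => hX2 i) (hmean_sum s), hvar_sum s]
  -- Cauchy sequence in L2
  set T : ℕ → Lp ℝ 2 μ := fun n => (hSmem n).toLp (S n) with hT
  have hSdiff : ∀ k n : ℕ, k ≤ n → S n - S k = ∑ i ∈ Finset.Ico k n, X i := by
    intro k n hkn
    simp only [hS]
    rw [Finset.sum_Ico_eq_sub X hkn]
  have hdist : ∀ k n : ℕ, k ≤ n →
      dist (T n) (T k) = Real.sqrt (∑ i ∈ Finset.Ico k n, v i) := by
    intro k n hkn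
    rw [dist_eq_norm, hT]
    rw [← MemLp.toLp_sub (hSmem n) (hSmem k), Lp.norm_toLp]
    rw [eLpNorm_congr_ae (ae_of_all _ fun ω => congrFun (hSdiff k n hkn) ω), hkey,
      ENNReal.toReal_ofReal (Real.sqrt_nonneg _)]
  have hbd : ∀ n k N : ℕ, N ≤ n → N ≤ k →
      dist (T n) (T k) ≤ Real.sqrt (tsum v - ∑ i ∈ Finset.range N, v i) := by
    have key : ∀ k n N : ℕ, N ≤ k → k ≤ n →
        dist (T n) (T k) ≤ Real.sqrt (tsum v - ∑ i ∈ Finset.range N, v i) := by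
      intro k n N hNk hkn
      rw [hdist k n hkn]
      apply Real.sqrt_le_sqrt
      have h1 : ∑ i ∈ Finset.Ico k n, v i
          = ∑ i ∈ Finset.range n, v i - ∑ i ∈ Finset.range k, v i :=
        Finset.sum_Ico_eq_sub v hkn
      have h2 : ∑ i ∈ Finset.range n, v i ≤ tsum v :=
        Summable.sum_le_tsum _ (fun i _ => hvnn i) hvsum
      have h3 : ∑ i ∈ Finset.range N, v i ≤ ∑ i ∈ Finset.range k, v i :=
        Finset.sum_le_sum_of_subset_of_nonneg (Finset.range_subset_range.2 hNk) fun i _ _ => hvnn i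
      linarith
    intro n k N hNn hNk
    rcases le_total k n with h | h
    · exact key k n N hNk h
    · rw [dist_comm]; exact key n k N hNn h
  have hten : Tendsto (fun N => Real.sqrt (tsum v - ∑ i ∈ Finset.range N, v i)) atTop (nhds 0) := by
    have h0 : Tendsto (fun N => tsum v - ∑ i ∈ Finset.range N, v i) atTop (nhds 0) := by
      have h1 := (tendsto_const_nhds (x := tsum v) (f := atTop)).sub
        hvsum.hasSum.tendsto_sum_nat
      simpa using h1
    have h2 := (Real.continuous_sqrt.tendsto 0).comp h0
    simpa [Function.comp_def] using h2
  have hcauchy : CauchySeq T := cauchySeq_of_le_tendsto_0 _ hbd hten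
  obtain ⟨F, hF⟩ := cauchySeq_tendsto_of_complete hcauchy
  set Blim0 : Ω → ℝ := ⇑F with hBlim0
  have hL2S : Tendsto (fun n => eLpNorm (S n - Blim0) 2 μ) atTop (nhds 0) := by
    have heq : ∀ n, eLpNorm (S n - Blim0) 2 μ = ENNReal.ofReal ‖T n - F‖ := by
      intro n
      have h1 : (S n - Blim0 : Ω → ℝ) =ᵐ[μ] ⇑(T n - F) := by
        filter_upwards [Lp.coeFn_sub (T n) F, (hSmem n).coeFn_toLp] with ω h2 h3
        simp only [Pi.sub_apply, h2, hBlim0]; rw [← h3]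
      rw [eLpNorm_congr_ae h1, Lp.norm_def, ENNReal.ofReal_toReal (Lp.eLpNorm_ne_top _)]
    simp only [heq]
    have h4 : Tendsto (fun n => ‖T n - F‖) atTop (nhds 0) := by
      have := (tendsto_iff_dist_tendsto_zero).1 hF
      simpa [dist_eq_norm] using this
    have h5 := (ENNReal.continuous_ofReal.tendsto 0).comp h4
    simpa [Function.comp_def] using h5
  -- martingale and a.s. convergence
  have hsm : ∀ i, StronglyMeasurable (B i) := fun i => (hmeas i).stronglyMeasurable
  set ℱ := Filtration.natural B hsm with hFil
  have hadp : ∀ n, StronglyMeasurable[ℱ n] (S (n + 1)) := by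
    intro n
    have hfun : S (n + 1) = fun ω => ∑ i ∈ Finset.range (n + 1), X i ω := by
      funext ω; exact hSapp (n + 1) ω
    rw [hfun]
    apply Measurable.stronglyMeasurable
    apply Finset.measurable_sum
    intro i hi
    have hBi : StronglyMeasurable[ℱ i] (B i) := Filtration.stronglyAdapted_natural hsm i
    have hBn : StronglyMeasurable[ℱ n] (B i) :=
      hBi.mono (ℱ.mono (Nat.lt_succ_iff.mp (Finset.mem_range.mp hi)))
    exact hBn.measurable.sub_const _
  have hcond0 : ∀ i k : ℕ, i < k → μ[X k|ℱ i] =ᵐ[μ] 0 := by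
    intro i k hik
    have h4 : μ[B k|ℱ i] =ᵐ[μ] fun _ => ∫ ω, B k ω ∂μ :=
      hindep.condExp_natural_ae_eq_of_lt hsm hik
    have h5 := condExp_sub (μ := μ) (m := ℱ i) (hBint k) (integrable_const (m k))
    refine EventuallyEq.trans (by exact h5) ?_
    have h6 : μ[(fun _ => m k : Ω → ℝ)|ℱ i] = fun _ => m k := condExp_const (ℱ.le i) (m k)
    filter_upwards [h4] with ω hω
    simp only [Pi.sub_apply, hω, h6, Pi.zero_apply]
    simp [hm]
  have hmart : Martingale (fun n => S (n + 1)) ℱ μ := by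
    constructor
    · exact fun n => hadp n
    · intro i j hij
      have hdecomp : S (j + 1) = S (i + 1) + ∑ k ∈ Finset.Ico (i + 1) (j + 1), X k := by
        have := hSdiff (i + 1) (j + 1) (Nat.succ_le_succ hij)
        rw [← this]; ring
      show μ[S (j + 1)|ℱ i] =ᵐ[μ] S (i + 1)
      rw [hdecomp]
      refine (condExp_add (hSint (i + 1)) (integrable_finset_sum' _ fun k _ => hXint k) (ℱ i)).trans ?_
      have h1 : μ[S (i + 1)|ℱ i] =ᵐ[μ] S (i + 1) := by
        rw [condExp_of_stronglyMeasurable (ℱ.le i) (hadp i) (hSint (i + 1))]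
      have h2 : μ[(∑ k ∈ Finset.Ico (i + 1) (j + 1), X k)|ℱ i] =ᵐ[μ] 0 := by
        refine (condExp_finsetSum (fun k _ => hXint k) (ℱ i)).trans ?_
        have h3 : ∀ᵐ ω ∂μ, ∀ k ∈ (↑(Finset.Ico (i + 1) (j + 1)) : Set ℕ),
            (μ[X k|ℱ i]) ω = 0 :=
          (ae_ball_iff (Finset.Ico (i + 1) (j + 1) : Finset ℕ).countable_toSet).2
            fun k hk => hcond0 i k (Finset.mem_Ico.mp (Finset.mem_coe.mp hk)).1
        filter_upwards [h3] with ω hω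
        rw [Finset.sum_apply]
        exact Finset.sum_eq_zero fun k hk => hω k (Finset.mem_coe.mpr hk)
      filter_upwards [h1, h2] with ω hω1 hω2
      simp only [Pi.add_apply, hω1, hω2, Pi.zero_apply, add_zero]
  have hSnorm2 : ∀ n, eLpNorm (S n) 2 μ ≤ ENNReal.ofReal (Real.sqrt (tsum v)) := by
    intro n
    rw [hS, hkey (Finset.range n)]
    exact ENNReal.ofReal_le_ofReal
      (Real.sqrt_le_sqrt (Summable.sum_le_tsum _ (fun i _ => hvnn i) hvsum))
  have hbdd : ∀ n, eLpNorm (S (n + 1)) 1 μ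
      ≤ (((Real.sqrt (tsum v)).toNNReal : ℝ≥0) : ℝ≥0∞) := by
    intro n
    refine le_trans (eLpNorm_le_eLpNorm_of_exponent_le (p := 1) (q := 2) (by norm_num)
      (hSmem (n + 1)).aestronglyMeasurable) ?_
    exact le_of_le_of_eq (hSnorm2 (n + 1)) rfl
  have has := hmart.submartingale.exists_ae_tendsto_of_bdd hbdd
  have hmeasin : TendstoInMeasure μ S atTop Blim0 :=
    tendstoInMeasure_of_tendsto_eLpNorm_of_ne_top two_ne_zero ENNReal.ofNat_ne_top
      (fun n => (hSmem n).aestronglyMeasurable) (Lp.aestronglyMeasurable F) hL2S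
  obtain ⟨ns, hns, hnsae⟩ := hmeasin.exists_seq_tendsto_ae
  have haeS : ∀ᵐ ω ∂μ, Tendsto (fun n => S n ω) atTop (nhds (Blim0 ω)) := by
    filter_upwards [has, hnsae] with ω h1 h2
    obtain ⟨c, hc⟩ := h1
    have hc' : Tendsto (fun n => S n ω) atTop (nhds c) :=
      (tendsto_add_atTop_iff_nat 1).mp hc
    have h3 : Tendsto (fun j => S (ns j) ω) atTop (nhds c) := hc'.comp hns.tendsto_atTop
    rwa [tendsto_nhds_unique h3 h2] at hc'
  -- assemble
  refine ⟨fun ω => Blim0 ω + mInf, ?_, ?_⟩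
  · filter_upwards [haeS] with ω h1
    have h2 : ∀ N, ∑ i ∈ Finset.range N, B i ω = S N ω + ∑ i ∈ Finset.range N, m i := by
      intro N
      rw [hSapp, ← Finset.sum_add_distrib]
      exact Finset.sum_congr rfl fun i _ => by simp [hX]
    simp only [h2]
    exact h1.add hm_tend2
  · have heqf : ∀ N : ℕ, (fun ω => (∑ i ∈ Finset.range N, B i ω) - (Blim0 ω + mInf))
        = (S N - Blim0) + fun _ => (∑ i ∈ Finset.range N, m i) - mInf := by
      intro N
      funext ω
      have hb : ∑ i ∈ Finset.range N, B i ω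
          = (∑ i ∈ Finset.range N, X i ω) + ∑ i ∈ Finset.range N, m i := by
        rw [← Finset.sum_add_distrib]
        exact Finset.sum_congr rfl fun i _ => by simp [hX]
      simp only [Pi.add_apply, Pi.sub_apply, hb, hSapp]
      ring
    have hub : ∀ N, eLpNorm (fun ω => (∑ i ∈ Finset.range N, B i ω) - (Blim0 ω + mInf)) 2 μ
        ≤ eLpNorm (S N - Blim0) 2 μ
          + ENNReal.ofReal |(∑ i ∈ Finset.range N, m i) - mInf| := by
      intro N
      rw [heqf N]
      refine le_trans (eLpNorm_add_le ((hSmem N).aestronglyMeasurable.sub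
        (Lp.aestronglyMeasurable F)) aestronglyMeasurable_const one_le_two) ?_
      gcongr
      rw [eLpNorm_const _ two_ne_zero (IsProbabilityMeasure.ne_zero μ)]
      simp [Real.enorm_eq_ofReal_abs]
    have hconst : Tendsto (fun N => ENNReal.ofReal |(∑ i ∈ Finset.range N, m i) - mInf|)
        atTop (nhds 0) := by
      have h0 : Tendsto (fun N => (∑ i ∈ Finset.range N, m i) - mInf) atTop (nhds 0) := by
        simpa using hm_tend2.sub (tendsto_const_nhds (x := mInf))
      have h1 : Tendsto (fun N => |(∑ i ∈ Finset.range N, m i) - mInf|) atTop (nhds 0) := by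
        simpa using h0.abs
      have h2 := (ENNReal.continuous_ofReal.tendsto 0).comp h1
      simpa [Function.comp_def] using h2
    refine tendsto_of_tendsto_of_tendsto_of_le_of_le tendsto_const_nhds ?_
      (fun N => zero_le) hub
    simpa using hL2S.add hconst
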